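/- For the learning rates α_t = (H+1)/(H+t) with H ≥ 1 and weights α_t^i := α_i · ∏_{j=i+1}^t (1 − α_j), for every fixed i ≥ 1 the infinite series over t converges with ∑_{t=i}^∞ α_t^i = 1 + 1/H. -/

import Mathlib

open Finset

noncomputable def lr (H : ℕ) (t : ℕ) : ℝ := ((H : ℝ) + 1) / ((H : ℝ) + t)

noncomputable def w (H : ℕ) (t i : ℕ) : ℝ :=
  lr H i * ∏ j ∈ Finset.Icc (i + 1) t, (1 - lr H j)

noncomputable def w0 (H : ℕ) (t : ℕ) : ℝ :=
  ∏ j ∈ Finset.Icc 1 t, (1 - lr H j)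

noncomputable def Pw (H i n : ℕ) : ℝ := ∏ j ∈ Finset.Icc (i + 1) (i + n), (1 - lr H j)

noncomputable def fw (H i n : ℕ) : ℝ := ((H : ℝ) + i + n) * Pw H i n

lemma one_sub_lr (H j : ℕ) (hj : 1 ≤ j) :
    (1 : ℝ) - lr H j = ((j : ℝ) - 1) / ((H : ℝ) + j) := by
  have hj' : (1 : ℝ) ≤ (j : ℝ) := by exact_mod_cast hj
  have h : (0 : ℝ) < (H : ℝ) + j := by positivity
  unfold lr
  field_simp
  ring

lemma Pw_succ (H i n : ℕ) : Pw H i (n + 1) = Pw H i n * (1 - lr H (i + n + 1)) := by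
  unfold Pw
  have h : i + (n + 1) = (i + n) + 1 := by ring
  rw [h, Finset.prod_Icc_succ_top (by omega : i + 1 ≤ i + n + 1)]

lemma one_sub_lr_nonneg (H j : ℕ) (hj : 1 ≤ j) : 0 ≤ (1 : ℝ) - lr H j := by
  rw [one_sub_lr H j hj]
  have hj' : (1 : ℝ) ≤ (j : ℝ) := by exact_mod_cast hj
  have h : (0 : ℝ) < (H : ℝ) + j := by positivity
  apply div_nonneg <;> linarith

lemma Pw_nonneg (H i n : ℕ) (hi : 1 ≤ i) : 0 ≤ Pw H i n := by
  apply Finset.prod_nonneg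
  intro j hj
  simp only [Finset.mem_Icc] at hj
  exact one_sub_lr_nonneg H j (by omega)

lemma Pw_le (H i : ℕ) (hH : 1 ≤ H) (hi : 1 ≤ i) (n : ℕ) :
    Pw H i n ≤ ((i : ℝ) * (i + 1)) / (((i : ℝ) + n) * ((i : ℝ) + n + 1)) := by
  have hi' : (1 : ℝ) ≤ (i : ℝ) := by exact_mod_cast hi
  have hH' : (1 : ℝ) ≤ (H : ℝ) := by exact_mod_cast hH
  induction n with
  | zero =>
    simp only [Pw, Nat.add_zero, Nat.cast_zero, add_zero]
    rw [Finset.Icc_eq_empty (by omega), Finset.prod_empty]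
    rw [div_self (by positivity)]
  | succ n ih =>
    have hn' : (0 : ℝ) ≤ (n : ℝ) := by positivity
    rw [Pw_succ]
    have hfac : (1 : ℝ) - lr H (i + n + 1) ≤ ((i : ℝ) + n) / ((i : ℝ) + n + 2) := by
      rw [one_sub_lr H (i + n + 1) (by omega)]
      rw [div_le_div_iff₀ (by push_cast; linarith) (by linarith)]
      push_cast
      nlinarith
    have hfac0 : 0 ≤ (1 : ℝ) - lr H (i + n + 1) := one_sub_lr_nonneg H _ (by omega)
    have hA0 : 0 ≤ ((i : ℝ) * (i + 1)) / (((i : ℝ) + n) * ((i : ℝ) + n + 1)) := by positivity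
    calc Pw H i n * (1 - lr H (i + n + 1))
        ≤ (((i : ℝ) * (i + 1)) / (((i : ℝ) + n) * ((i : ℝ) + n + 1))) *
            (((i : ℝ) + n) / ((i : ℝ) + n + 2)) := mul_le_mul ih hfac hfac0 hA0
      _ = ((i : ℝ) * (i + 1)) / (((i : ℝ) + ((n + 1 : ℕ) : ℝ)) * ((i : ℝ) + ((n + 1 : ℕ) : ℝ) + 1)) := by
          push_cast
          rw [div_mul_div_comm, div_eq_div_iff (by positivity) (by positivity)]
          ring

lemma partial_sum (H i : ℕ) (hH : 1 ≤ H) (hi : 1 ≤ i) (n : ℕ) :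
    ∑ k ∈ Finset.range n, w H (i + k) i =
      1 + 1 / (H : ℝ) - ((H : ℝ) + 1) / ((H : ℝ) * ((H : ℝ) + i)) * fw H i n := by
  have hi' : (1 : ℝ) ≤ (i : ℝ) := by exact_mod_cast hi
  have hH' : (1 : ℝ) ≤ (H : ℝ) := by exact_mod_cast hH
  induction n with
  | zero =>
    simp only [Finset.range_zero, Finset.sum_empty, fw, Pw, Nat.add_zero, Nat.cast_zero,
      add_zero]
    rw [Finset.Icc_eq_empty (by omega), Finset.prod_empty]
    field_simp
    ring
  | succ n ih =>
    have key : fw H i n - fw H i (n + 1) = (H : ℝ) * Pw H i n := by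
      unfold fw
      rw [Pw_succ, one_sub_lr H (i + n + 1) (by omega)]
      have hpos : (0 : ℝ) < (H : ℝ) + (i + n + 1 : ℕ) := by push_cast; linarith
      push_cast
      push_cast at hpos
      field_simp
      ring
    have hw : w H (i + n) i = ((H : ℝ) + 1) / ((H : ℝ) * ((H : ℝ) + i)) *
        (fw H i n - fw H i (n + 1)) := by
      rw [key]
      show lr H i * Pw H i n = _
      unfold lr
      field_simp
    rw [Finset.sum_range_succ, ih, hw]
    ring

lemma fw_tendsto (H i : ℕ) (hH : 1 ≤ H) (hi : 1 ≤ i) :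
    Filter.Tendsto (fw H i) Filter.atTop (nhds 0) := by
  have hi' : (1 : ℝ) ≤ (i : ℝ) := by exact_mod_cast hi
  have hH' : (1 : ℝ) ≤ (H : ℝ) := by exact_mod_cast hH
  have hg : Filter.Tendsto (fun n : ℕ => ((i : ℝ) * (i + 1) * ((H : ℝ) + i + 1)) / n)
      Filter.atTop (nhds 0) := tendsto_const_div_atTop_nhds_zero_nat _
  apply squeeze_zero' ?_ ?_ hg
  · filter_upwards with n
    exact mul_nonneg (by positivity) (Pw_nonneg H i n hi)
  · filter_upwards [Filter.eventually_ge_atTop 1] with n hn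
    have hn' : (1 : ℝ) ≤ (n : ℝ) := by exact_mod_cast hn
    have h1 : fw H i n ≤ ((H : ℝ) + i + n) *
        (((i : ℝ) * (i + 1)) / (((i : ℝ) + n) * ((i : ℝ) + n + 1))) :=
      mul_le_mul_of_nonneg_left (Pw_le H i hH hi n) (by positivity)
    refine h1.trans ?_
    rw [mul_comm, div_mul_eq_mul_div, div_le_div_iff₀ (by positivity) (by positivity)]
    have hA : (0:ℝ) ≤ ((H:ℝ)+i)*((n:ℝ)-1) := by
      apply mul_nonneg <;> linarith
    have hB : (n:ℝ)*n ≤ ((i:ℝ)+n)*((i:ℝ)+n+1) := by nlinarith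
    have step1 : ((H:ℝ)+i+n)*n ≤ ((H:ℝ)+i+1)*(((i:ℝ)+n)*((i:ℝ)+n+1)) := by nlinarith
    nlinarith [mul_le_mul_of_nonneg_left step1
      (show (0:ℝ) ≤ (i:ℝ)*((i:ℝ)+1) by positivity)]

theorem sum_weights_over_t (H : ℕ) (hH : 1 ≤ H) (i : ℕ) (hi : 1 ≤ i) :
    HasSum (fun n : ℕ => w H (i + n) i) (1 + 1 / (H : ℝ)) := by
  have hnonneg : ∀ n : ℕ, 0 ≤ w H (i + n) i := by
    intro n
    exact mul_nonneg (by unfold lr; positivity) (Pw_nonneg H i n hi)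
  rw [hasSum_iff_tendsto_nat_of_nonneg hnonneg]
  have heq : ∀ n : ℕ, ∑ k ∈ Finset.range n, w H (i + k) i =
      1 + 1 / (H : ℝ) - ((H : ℝ) + 1) / ((H : ℝ) * ((H : ℝ) + i)) * fw H i n :=
    partial_sum H i hH hi
  simp only [heq]
  have := ((fw_tendsto H i hH hi).const_mul (((H : ℝ) + 1) / ((H : ℝ) * ((H : ℝ) + i)))).const_sub (1 + 1 / (H : ℝ))
  simpa using this
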